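/- For 0 < X < 1 and A ≥ 8, the polynomial Ψ(X) = 1 + X(AX - X² - 3) satisfies Ψ(X) ≥ Ψ(X₁) = (2A³ + (18 - 2A²)√(A²-9) - 27A)/27 + 1 > 0, where X₁ = (A - √(A²-9))/3 is the unique critical point of Ψ in (0,1); in particular Ψ(X) > 0 on (0,1). -/

import Mathlib

open Real

/-- for A ≥ 8, Ψ(X) = 1 + X(AX - X² - 3) attains its minimum on (0,1)
at the unique critical point X₁ = (A - √(A²-9))/3, with positive minimum value;
hence Ψ > 0 on (0,1). -/
theorem psi_positive_on_unit_interval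
    (A : ℝ) (hA : 8 ≤ A)
    (Ψ : ℝ → ℝ) (hΨ : ∀ X, Ψ X = 1 + X * (A * X - X ^ 2 - 3))
    (X₁ : ℝ) (hX₁ : X₁ = (A - Real.sqrt (A ^ 2 - 9)) / 3) :
    (∀ X ∈ Set.Ioo (0 : ℝ) 1, Ψ X₁ ≤ Ψ X) ∧
    (∀ X ∈ Set.Ioo (0 : ℝ) 1, deriv Ψ X = 0 ↔ X = X₁) ∧
    Ψ X₁ = (2 * A ^ 3 + (18 - 2 * A ^ 2) * Real.sqrt (A ^ 2 - 9) - 27 * A) / 27 + 1 ∧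
    0 < Ψ X₁ ∧
    ∀ X ∈ Set.Ioo (0 : ℝ) 1, 0 < Ψ X := by
  set s := Real.sqrt (A ^ 2 - 9) with hs_def
  have hs0 : (0:ℝ) ≤ s := Real.sqrt_nonneg _
  have hs2 : s ^ 2 = A ^ 2 - 9 := Real.sq_sqrt (by nlinarith)
  have hs7 : (7:ℝ) ≤ s := by nlinarith
  have hsA : s < A := by nlinarith
  -- X₁ bounds
  have hX₁pos : 0 < X₁ := by rw [hX₁]; linarith
  have hX₁lt : X₁ < 1/3 := by
    rw [hX₁]
    nlinarith
  -- key : X₁ is a root of the derivative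
  have key : 3 * X₁ ^ 2 - 2 * A * X₁ + 3 = 0 := by
    rw [hX₁]; field_simp; nlinarith [hs2]
  -- minimum property
  have hmin : ∀ X ∈ Set.Ioo (0:ℝ) 1, Ψ X₁ ≤ Ψ X := by
    intro X hX
    obtain ⟨hX0, hX1⟩ := hX
    have key2 : Ψ X - Ψ X₁ = (X - X₁) ^ 2 * (A - X - 2 * X₁) := by
      rw [hΨ, hΨ]; linear_combination (X₁ - X) * key
    nlinarith [sq_nonneg (X - X₁)]
  -- derivative
  have hfun : Ψ = fun X => 1 + X * (A * X - X ^ 2 - 3) := funext hΨ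
  have hderiv : ∀ X : ℝ, deriv Ψ X = 2 * A * X - 3 * X ^ 2 - 3 := by
    intro X
    have h : HasDerivAt (fun X : ℝ => 1 + X * (A * X - X ^ 2 - 3))
        (2 * A * X - 3 * X ^ 2 - 3) X := by
      have h1 := ((hasDerivAt_id X).mul
        ((((hasDerivAt_id X).const_mul A).sub (hasDerivAt_pow 2 X)).sub_const 3)).const_add 1
      convert h1 using 1
      · rfl
      · rfl
      · rfl
      simp [id]
      ring
    rw [hfun]
    exact h.deriv
  have hval : Ψ X₁ = (2 * A ^ 3 + (18 - 2 * A ^ 2) * s - 27 * A) / 27 + 1 := by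
    rw [hΨ, hX₁]
    field_simp
    nlinarith [hs2, sq_nonneg s]
  have hposmin : 0 < Ψ X₁ := by
    rw [hΨ]
    nlinarith [sq_nonneg X₁]
  refine ⟨hmin, ?_, hval, hposmin, ?_⟩
  · intro X hX
    obtain ⟨hX0, hX1⟩ := hX
    rw [hderiv]
    constructor
    · intro h
      have hfac : (X - X₁) * (3 * X - (A + s)) = 0 := by
        rw [hX₁]; linear_combination -h - (1/3 : ℝ) * hs2
      rcases mul_eq_zero.mp hfac with h' | h'
      · linarith
      · exfalso; nlinarith
    · intro h; rw [h]; linarith [key]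
  · intro X hX
    exact lt_of_lt_of_le hposmin (hmin X hX)
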